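/- The number of permutations of [n] ending with k that have exactly m r-descents equals the number of permutations of [n] ending with k that have exactly m r-excedances. -/

import Mathlib

/-- Number of `r`-descents of a permutation `σ` of `[n]` (positions `i < n` with
`σ(i) ≥ σ(i+1) + r`), encoded on `Fin n`. -/
def rDesc (n r : ℕ) (σ : Equiv.Perm (Fin n)) : ℕ :=
  (Finset.univ.filter fun i : Fin n =>
    (if h : (i : ℕ) + 1 < n then ((σ ⟨(i : ℕ) + 1, h⟩ : Fin n) : ℕ) else n) + r ≤ (σ i : ℕ)).card

/-- Number of `r`-excedances of a permutation `σ` of `[n]` (positions `i ≤ n` with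
`σ(i) ≥ i + r`), encoded on `Fin n`. -/
def rExc (n r : ℕ) (σ : Equiv.Perm (Fin n)) : ℕ :=
  (Finset.univ.filter fun i : Fin n => (i : ℕ) + r ≤ (σ i : ℕ)).card

/-- The last value `σ(n)` of a permutation of `[n]` (as an element of `{1,…,n}`). -/
def lastVal (n : ℕ) (σ : Equiv.Perm (Fin n)) : ℕ :=
  if h : 0 < n then ((σ ⟨n - 1, Nat.sub_lt h Nat.one_pos⟩ : Fin n) : ℕ) + 1 else 0

/-- `Ar r n m k` = number of permutations of `[n]` with exactly `m` `r`-descents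
whose last value is `k`. -/
def Ar (r n m k : ℕ) : ℕ :=
  (Finset.univ.filter fun σ : Equiv.Perm (Fin n) => rDesc n r σ = m ∧ lastVal n σ = k).card

section AuxForStmt0

open Equiv Equiv.Perm Finset List

variable {n : ℕ}

/-- The cycle of `m` under `ψ`, as a finset (including `m` even if fixed). -/
def cset (ψ : Equiv.Perm (Fin n)) (m : Fin n) : Finset (Fin n) :=
  insert m (ψ.cycleOf m).support

/-- The cycle of `m` written as a list starting at `m`. -/
def blk (ψ : Equiv.Perm (Fin n)) (m : Fin n) : List (Fin n) :=
  if ψ m = m then [m] else ψ.toList m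

lemma blk_ne_nil (ψ : Equiv.Perm (Fin n)) (m : Fin n) : blk ψ m ≠ [] := by
  unfold blk
  split
  · simp
  · rw [Ne, Equiv.Perm.toList_eq_nil_iff]
    simpa using ‹¬ _›

lemma blk_get_zero (ψ : Equiv.Perm (Fin n)) (m : Fin n) (h : 0 < (blk ψ m).length) :
    (blk ψ m)[0] = m := by
  by_cases hm : ψ m = m
  · simp [blk, hm]
  · have h0 : 0 < (ψ.toList m).length := by simpa [blk, hm] using h
    have := Equiv.Perm.getElem_toList ψ m 0 h0
    simp only [List.get_eq_getElem, pow_zero] at this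
    simpa [blk, hm] using this

lemma blk_mem (ψ : Equiv.Perm (Fin n)) (m : Fin n) (y : Fin n) :
    y ∈ blk ψ m ↔ y ∈ cset ψ m := by
  unfold blk cset
  by_cases hm : ψ m = m
  · simp only [if_pos hm]
    have : (ψ.cycleOf m).support = ∅ := by
      simp [Equiv.Perm.support_cycleOf_eq_nil_iff, hm]
    simp [this]
  · simp only [if_neg hm, Equiv.Perm.mem_toList_iff, Finset.mem_insert,
      Equiv.Perm.mem_support_cycleOf_iff]
    have hms : m ∈ ψ.support := Equiv.Perm.mem_support.2 hm
    constructor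
    · rintro ⟨h1, h2⟩; exact Or.inr ⟨h1, h2⟩
    · rintro (rfl | ⟨h1, h2⟩)
      · exact ⟨Equiv.Perm.SameCycle.refl _ _, hms⟩
      · exact ⟨h1, h2⟩

lemma blk_nodup (ψ : Equiv.Perm (Fin n)) (m : Fin n) : (blk ψ m).Nodup := by
  unfold blk; split
  · simp
  · exact Equiv.Perm.nodup_toList ψ m

lemma blk_consec (ψ : Equiv.Perm (Fin n)) (m : Fin n) (j : ℕ)
    (h : j + 1 < (blk ψ m).length) :
    (blk ψ m)[j + 1] = ψ ((blk ψ m)[j]'(by omega)) := by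
  by_cases hm : ψ m = m
  · simp [blk, hm] at h
  · have h' : j + 1 < (ψ.toList m).length := by simpa [blk, hm] using h
    have h1 := Equiv.Perm.getElem_toList ψ m (j+1) h'
    have h2 := Equiv.Perm.getElem_toList ψ m j (by omega)
    simp only [blk, if_neg hm, h1, h2, pow_succ', Equiv.Perm.mul_apply]

lemma blk_last (ψ : Equiv.Perm (Fin n)) (m : Fin n) :
    ψ ((blk ψ m).getLast (blk_ne_nil ψ m)) = m := by
  by_cases hm : ψ m = m
  · simp [blk, hm]
  · have hne : ψ.toList m ≠ [] := by
      rw [Ne, Equiv.Perm.toList_eq_nil_iff]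
      simpa using hm
    have hlen : 0 < (ψ.toList m).length := List.length_pos_iff.2 hne
    have hgl : (blk ψ m).getLast (blk_ne_nil ψ m)
        = (ψ.toList m)[(ψ.toList m).length - 1] := by
      simp only [blk, if_neg hm]
      exact List.getLast_eq_getElem hne
    have h1 := Equiv.Perm.getElem_toList ψ m ((ψ.toList m).length - 1) (by omega)
    rw [hgl, h1, ← Equiv.Perm.mul_apply, ← pow_succ']
    have hlen2 : (ψ.toList m).length = (ψ.cycleOf m).support.card :=
      Equiv.Perm.length_toList ψ m
    have := Equiv.Perm.pow_mod_card_support_cycleOf_self_apply ψ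
      ((ψ.toList m).length - 1 + 1) m
    rw [Nat.sub_add_cancel (by omega)] at this ⊢
    rw [← hlen2, Nat.mod_self, pow_zero] at this
    rw [← this]
    rfl

lemma mem_cset_self (ψ : Equiv.Perm (Fin n)) (m : Fin n) : m ∈ cset ψ m := by
  simp [cset]

lemma apply_mem_cset_iff (ψ : Equiv.Perm (Fin n)) (m x : Fin n) :
    ψ x ∈ cset ψ m ↔ x ∈ cset ψ m := by
  unfold cset
  simp only [Finset.mem_insert, Equiv.Perm.mem_support_cycleOf_iff]
  constructor
  · rintro (h | ⟨h1, h2⟩)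
    · rcases eq_or_ne x m with rfl | hxm
      · exact Or.inl rfl
      · refine Or.inr ⟨?_, ?_⟩
        · exact (Equiv.Perm.SameCycle.symm ⟨1, by simpa using h⟩)
        · by_contra hns
          have hfix : ψ m = m := Equiv.Perm.notMem_support.1 hns
          exact hxm (ψ.injective (h.trans hfix.symm))
    · rcases eq_or_ne x m with rfl | hxm
      · exact Or.inl rfl
      · refine Or.inr ⟨?_, h2⟩
        exact Equiv.Perm.sameCycle_apply_right.1 h1
  · rintro (rfl | ⟨h1, h2⟩)
    · rcases eq_or_ne (ψ x) x with h | h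
      · exact Or.inl h
      · exact Or.inr ⟨⟨1, by simp⟩, Equiv.Perm.mem_support.2 h⟩
    · exact Or.inr ⟨(Equiv.Perm.sameCycle_apply_right).2 h1, h2⟩

lemma pow_mem_of_inv (ψ : Equiv.Perm (Fin n)) {s : Finset (Fin n)}
    (Hs : ∀ x, ψ x ∈ s ↔ x ∈ s) (k : ℕ) (x : Fin n) (hx : x ∈ s) : (ψ ^ k) x ∈ s := by
  induction k with
  | zero => simpa
  | succ k ih => rw [pow_succ', Equiv.Perm.mul_apply]; exact (Hs _).2 ih

lemma cset_subset (ψ : Equiv.Perm (Fin n)) {s : Finset (Fin n)}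
    (Hs : ∀ x, ψ x ∈ s ↔ x ∈ s) {m : Fin n} (hm : m ∈ s) : cset ψ m ⊆ s := by
  intro y hy
  rcases Finset.mem_insert.1 hy with rfl | hy
  · exact hm
  · obtain ⟨h1, _⟩ := Equiv.Perm.mem_support_cycleOf_iff.1 hy
    obtain ⟨k, _, hk⟩ := h1.exists_pow_eq'
    exact hk ▸ pow_mem_of_inv ψ Hs k m hm

lemma sdiff_cset_inv (ψ : Equiv.Perm (Fin n)) {s : Finset (Fin n)}
    (Hs : ∀ x, ψ x ∈ s ↔ x ∈ s) (m : Fin n) :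
    ∀ x, ψ x ∈ s \ cset ψ m ↔ x ∈ s \ cset ψ m := by
  intro x
  simp only [Finset.mem_sdiff, Hs, apply_mem_cset_iff]

/-- The Foata-style word of `ψ` on the set `s`: concatenation of cycles, each led by its
minimum, in decreasing order of minima. -/
def wordRec (ψ : Equiv.Perm (Fin n)) (s : Finset (Fin n)) : List (Fin n) :=
  if h : s.Nonempty then
    wordRec ψ (s \ cset ψ (s.min' h)) ++ blk ψ (s.min' h)
  else []
termination_by s.card
decreasing_by
  exact Finset.card_lt_card ⟨Finset.sdiff_subset, fun hsub => by
    have := hsub (s.min'_mem h)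
    simp [mem_cset_self] at this⟩

theorem wordRec_spec (ψ : Equiv.Perm (Fin n)) :
    ∀ (N : ℕ) (s : Finset (Fin n)), s.card ≤ N → (∀ x, ψ x ∈ s ↔ x ∈ s) →
    (∀ x, x ∈ wordRec ψ s ↔ x ∈ s) ∧
    (wordRec ψ s).Nodup ∧
    (∀ (i : ℕ) (h1 : i + 1 < (wordRec ψ s).length),
      ψ ((wordRec ψ s)[i]'(by omega)) = (wordRec ψ s)[i+1] ∨
      (ψ ((wordRec ψ s)[i]'(by omega)) ≤ (wordRec ψ s)[i]'(by omega) ∧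
        (wordRec ψ s)[i+1] < (wordRec ψ s)[i]'(by omega))) ∧
    (∀ (h : wordRec ψ s ≠ []) (hne : s.Nonempty),
      ψ ((wordRec ψ s).getLast h) = s.min' hne) := by
  intro N
  induction N with
  | zero =>
    intro s hcard _
    have hs : s = ∅ := Finset.card_eq_zero.1 (Nat.le_zero.1 hcard)
    subst hs
    simp only [show wordRec ψ ∅ = ([] : List (Fin n)) by rw [wordRec, dif_neg (by simp)]]
    refine ⟨by simp, by simp, by simp, by simp⟩
  | succ N IH =>
    intro s hcard Hs
    by_cases h : s.Nonempty
    · obtain ⟨m, s', hm, hs', hw⟩ :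
        ∃ (m : Fin n) (s' : Finset (Fin n)), m = s.min' h ∧ s' = s \ cset ψ m ∧
          wordRec ψ s = wordRec ψ s' ++ blk ψ m := by
        refine ⟨s.min' h, _, rfl, rfl, ?_⟩
        rw [wordRec, dif_pos h]
      have hms : m ∈ s := hm ▸ s.min'_mem h
      have hmle : ∀ y ∈ s, m ≤ y := fun y hy => hm ▸ s.min'_le y hy
      have Hs' : ∀ x, ψ x ∈ s' ↔ x ∈ s' := hs' ▸ sdiff_cset_inv ψ Hs m
      have hcard' : s'.card ≤ N := by
        have hlt : s'.card < s.card := by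
          rw [hs']
          exact Finset.card_lt_card
            ((Finset.ssubset_iff_of_subset Finset.sdiff_subset).2
              ⟨m, hms, fun hc => (Finset.mem_sdiff.1 hc).2 (mem_cset_self ψ m)⟩)
        omega
      obtain ⟨ihmem, ihnd, ihc, ihlast⟩ := IH s' hcard' Hs'
      have hcs : cset ψ m ⊆ s := cset_subset ψ Hs hms
      have hs'sub : ∀ x ∈ s', x ∈ s ∧ x ∉ cset ψ m := by
        intro x hx; rw [hs'] at hx; exact Finset.mem_sdiff.1 hx
      have hmem : ∀ x, x ∈ wordRec ψ s ↔ x ∈ s := by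
        intro x
        rw [hw, List.mem_append, ihmem, blk_mem]
        constructor
        · rintro (hx | hx)
          · exact (hs'sub x hx).1
          · exact hcs hx
        · intro hx
          by_cases hxc : x ∈ cset ψ m
          · exact Or.inr hxc
          · exact Or.inl (by rw [hs']; exact Finset.mem_sdiff.2 ⟨hx, hxc⟩)
      have hdisj : ∀ x ∈ wordRec ψ s', x ∉ blk ψ m := by
        intro x hx
        rw [blk_mem]
        exact (hs'sub x ((ihmem x).1 hx)).2
      have hnd : (wordRec ψ s).Nodup := by
        rw [hw]
        exact List.Nodup.append ihnd (blk_nodup ψ m) hdisj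
      have hbpos : 0 < (blk ψ m).length := List.length_pos_iff.2 (blk_ne_nil ψ m)
      refine ⟨hmem, hnd, ?_, ?_⟩
      · -- consecutive dichotomy
        intro i h1
        have hlen : (wordRec ψ s).length = (wordRec ψ s').length + (blk ψ m).length := by
          rw [hw, List.length_append]
        rcases lt_trichotomy (i+1) (wordRec ψ s').length with hi | hi | hi
        · have e1 : (wordRec ψ s)[i]'(by omega) = (wordRec ψ s')[i]'(by omega) := by
            simp only [hw]
            exact List.getElem_append_left (by omega)
          have e2 : (wordRec ψ s)[i+1]'(by omega) = (wordRec ψ s')[i+1]'(by omega) := by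
            simp only [hw]
            exact List.getElem_append_left (by omega)
          rw [e1, e2]
          exact ihc i hi
        · have hw'len : 0 < (wordRec ψ s').length := by omega
          have hw'ne : wordRec ψ s' ≠ [] := List.length_pos_iff.1 hw'len
          have hs'ne : s'.Nonempty :=
            ⟨(wordRec ψ s')[0]'hw'len, (ihmem _).1 (List.getElem_mem _)⟩
          have e1 : (wordRec ψ s)[i]'(by omega) = (wordRec ψ s').getLast hw'ne := by
            have e0 : (wordRec ψ s)[i]'(by omega) = (wordRec ψ s')[i]'(by omega) := by
              simp only [hw]
              exact List.getElem_append_left (by omega)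
            rw [e0, List.getLast_eq_getElem]
            exact getElem_congr_idx (by omega)
          have e2 : (wordRec ψ s)[i+1]'(by omega) = m := by
            simp only [hw]
            rw [List.getElem_append_right (by omega : (wordRec ψ s').length ≤ i + 1)]
            exact (getElem_congr_idx (show i + 1 - (wordRec ψ s').length = 0 by omega)).trans
              (blk_get_zero ψ m hbpos)
          right
          rw [e1, e2, ihlast hw'ne hs'ne]
          have hgl : (wordRec ψ s').getLast hw'ne ∈ s' := by
            rw [← ihmem]; exact List.getLast_mem hw'ne
          refine ⟨s'.min'_le _ hgl, ?_⟩
          have h1' : m ≤ (wordRec ψ s').getLast hw'ne := hmle _ (hs'sub _ hgl).1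
          have h2' : m ≠ (wordRec ψ s').getLast hw'ne := by
            intro he
            exact (hs'sub _ hgl).2 (he ▸ mem_cset_self ψ m)
          exact lt_of_le_of_ne h1' h2'
        · have e1 : (wordRec ψ s)[i]'(by omega) =
              (blk ψ m)[i - (wordRec ψ s').length]'(by omega) := by
            simp only [hw]
            exact List.getElem_append_right (by omega)
          have e2 : (wordRec ψ s)[i+1]'(by omega) =
              (blk ψ m)[(i - (wordRec ψ s').length) + 1]'(by omega) := by
            simp only [hw]
            rw [List.getElem_append_right (by omega : (wordRec ψ s').length ≤ i + 1)]
            exact getElem_congr_idx (by omega)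
          left
          rw [e1, e2]
          exact (blk_consec ψ m _ (by omega)).symm
      · -- last
        intro hne0 hne
        have e1 : (wordRec ψ s).getLast hne0 = (blk ψ m).getLast (blk_ne_nil ψ m) := by
          have hne2 : wordRec ψ s' ++ blk ψ m ≠ [] := hw ▸ hne0
          rw [List.getLast_congr hne0 hne2 hw]
          exact List.getLast_append_of_ne_nil _ (blk_ne_nil ψ m)
        rw [e1, blk_last, hm]
    · simp only [show wordRec ψ s = ([] : List (Fin n)) by rw [wordRec, dif_neg h]]
      have hs : s = ∅ := Finset.not_nonempty_iff_eq_empty.1 h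
      subst hs
      refine ⟨by simp, by simp, by simp, by simp⟩

lemma univ_inv (ψ : Equiv.Perm (Fin n)) :
    ∀ x : Fin n, ψ x ∈ (Finset.univ : Finset (Fin n)) ↔ x ∈ (Finset.univ : Finset (Fin n)) := by
  simp

/-- Specialized spec for `s = univ`. -/
lemma wordUniv_spec (ψ : Equiv.Perm (Fin n)) :
    (∀ x, x ∈ wordRec ψ Finset.univ ↔ x ∈ (Finset.univ : Finset (Fin n))) ∧
    (wordRec ψ Finset.univ).Nodup ∧
    (∀ (i : ℕ) (h1 : i + 1 < (wordRec ψ Finset.univ).length),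
      ψ ((wordRec ψ Finset.univ)[i]'(by omega)) = (wordRec ψ Finset.univ)[i+1] ∨
      (ψ ((wordRec ψ Finset.univ)[i]'(by omega)) ≤ (wordRec ψ Finset.univ)[i]'(by omega) ∧
        (wordRec ψ Finset.univ)[i+1] < (wordRec ψ Finset.univ)[i]'(by omega))) ∧
    (∀ (h : wordRec ψ Finset.univ ≠ []) (hne : (Finset.univ : Finset (Fin n)).Nonempty),
      ψ ((wordRec ψ Finset.univ).getLast h) = Finset.univ.min' hne) :=
  wordRec_spec ψ (Finset.univ.card) Finset.univ le_rfl (univ_inv ψ)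

lemma length_wordUniv (ψ : Equiv.Perm (Fin n)) :
    (wordRec ψ Finset.univ).length = n := by
  obtain ⟨hmem, hnd, -, -⟩ := wordUniv_spec ψ
  have h1 : (wordRec ψ Finset.univ).toFinset = Finset.univ := by
    ext x; simp [List.mem_toFinset, hmem]
  have h2 := List.toFinset_card_of_nodup hnd
  rw [h1] at h2
  simp only [Finset.card_univ, Fintype.card_fin] at h2
  omega

/-- The word of `ψ` as a function `Fin n → Fin n`. -/
def fw (ψ : Equiv.Perm (Fin n)) (i : Fin n) : Fin n :=
  (wordRec ψ Finset.univ)[(i : ℕ)]'(by rw [length_wordUniv]; exact i.isLt)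

lemma fw_injective (ψ : Equiv.Perm (Fin n)) : Function.Injective (fw ψ) := by
  intro i j hij
  obtain ⟨-, hnd, -, -⟩ := wordUniv_spec ψ
  have := (List.nodup_iff_injective_get).1 hnd
  have h2 : (wordRec ψ Finset.univ).get ⟨(i : ℕ), _⟩ =
      (wordRec ψ Finset.univ).get ⟨(j : ℕ), by rw [length_wordUniv]; exact j.isLt⟩ := hij
  have := this h2
  exact Fin.ext (by simpa using congrArg Fin.val this)

/-- helper: splitting a concatenation at the unique occurrence of `x`. -/
lemma split_unique {α : Type*} {x : α} :
    ∀ (a c b d : List α), a ++ b = c ++ d → x ∉ a → x ∉ c →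
      b.head? = some x → d.head? = some x → a = c ∧ b = d := by
  intro a
  induction a with
  | nil =>
    intro c b d h hxa hxc hb hd
    cases c with
    | nil => exact ⟨rfl, h⟩
    | cons z c' =>
      exfalso
      simp only [List.nil_append] at h
      subst h
      simp only [List.cons_append, List.head?_cons, Option.some.injEq] at hb
      exact hxc (hb ▸ List.mem_cons_self)
  | cons y a' ih =>
    intro c b d h hxa hxc hb hd
    cases c with
    | nil =>
      exfalso
      simp only [List.nil_append] at h
      rw [← h] at hd
      simp only [List.cons_append, List.head?_cons, Option.some.injEq] at hd
      exact hxa (hd ▸ List.mem_cons_self)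
    | cons z c' =>
      simp only [List.cons_append, List.cons.injEq] at h
      obtain ⟨rfl, h2⟩ := h
      have hxa' : x ∉ a' := fun hx => hxa (List.mem_cons_of_mem _ hx)
      have hxc' : x ∉ c' := fun hx => hxc (List.mem_cons_of_mem _ hx)
      obtain ⟨e1, e2⟩ := ih c' b d h2 hxa' hxc' hb hd
      exact ⟨by rw [e1], e2⟩

lemma blk_apply (ψ : Equiv.Perm (Fin n)) (m : Fin n) (j : ℕ) (hj : j < (blk ψ m).length) :
    ψ ((blk ψ m)[j]) = if _ : j + 1 < (blk ψ m).length then (blk ψ m)[j+1] else m := by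
  split
  · exact (blk_consec ψ m j ‹_›).symm
  · have e1 : (blk ψ m)[j] = (blk ψ m).getLast (blk_ne_nil ψ m) := by
      rw [List.getLast_eq_getElem]
      exact getElem_congr_idx (by omega)
    rw [e1, blk_last]

lemma blk_head? (ψ : Equiv.Perm (Fin n)) (m : Fin n) : (blk ψ m).head? = some m := by
  rw [List.head?_eq_head (blk_ne_nil ψ m)]
  congr 1
  rw [List.head_eq_getElem]
  exact blk_get_zero ψ m (List.length_pos_iff.2 (blk_ne_nil ψ m))

theorem wordRec_inj (ψ ψ' : Equiv.Perm (Fin n)) :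
    ∀ (N : ℕ) (s : Finset (Fin n)), s.card ≤ N →
    (∀ x, ψ x ∈ s ↔ x ∈ s) → (∀ x, ψ' x ∈ s ↔ x ∈ s) →
    wordRec ψ s = wordRec ψ' s → ∀ x ∈ s, ψ x = ψ' x := by
  intro N
  induction N with
  | zero =>
    intro s hcard _ _ _ x hx
    have hs : s = ∅ := Finset.card_eq_zero.1 (Nat.le_zero.1 hcard)
    subst hs
    simp at hx
  | succ N IH =>
    intro s hcard Hs Hs' heq x hx
    by_cases h : s.Nonempty
    · have hm : s.min' h = s.min' h := rfl
      set m := s.min' h with hmdef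
      have hw1 : wordRec ψ s = wordRec ψ (s \ cset ψ m) ++ blk ψ m := by
        rw [wordRec, dif_pos h]
      have hw2 : wordRec ψ' s = wordRec ψ' (s \ cset ψ' m) ++ blk ψ' m := by
        rw [wordRec, dif_pos h]
      have hms : m ∈ s := s.min'_mem h
      -- specs for the two sub-words
      have Hsub : ∀ y, ψ y ∈ s \ cset ψ m ↔ y ∈ s \ cset ψ m := sdiff_cset_inv ψ Hs m
      have Hsub' : ∀ y, ψ' y ∈ s \ cset ψ' m ↔ y ∈ s \ cset ψ' m := sdiff_cset_inv ψ' Hs' m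
      have hmem1 := (wordRec_spec ψ (s \ cset ψ m).card (s \ cset ψ m) le_rfl Hsub).1
      have hmem2 := (wordRec_spec ψ' (s \ cset ψ' m).card (s \ cset ψ' m) le_rfl Hsub').1
      have hm1 : m ∉ wordRec ψ (s \ cset ψ m) := by
        rw [hmem1]
        simp [mem_cset_self]
      have hm2 : m ∉ wordRec ψ' (s \ cset ψ' m) := by
        rw [hmem2]
        simp [mem_cset_self]
      have heq2 : wordRec ψ (s \ cset ψ m) ++ blk ψ m
          = wordRec ψ' (s \ cset ψ' m) ++ blk ψ' m := by
        rw [← hw1, ← hw2, heq]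
      obtain ⟨hpre, hblk⟩ := split_unique _ _ _ _ heq2 hm1 hm2 (blk_head? ψ m) (blk_head? ψ' m)
      -- agreement on the cycle of m
      have hag : ∀ y ∈ blk ψ m, ψ y = ψ' y := by
        intro y hy
        obtain ⟨j, hj, rfl⟩ := List.mem_iff_getElem.1 hy
        rw [blk_apply ψ m j hj]
        have hj' : j < (blk ψ' m).length := hblk ▸ hj
        have e1 : (blk ψ m)[j]'hj = (blk ψ' m)[j]'hj' := getElem_congr_coll hblk
        rw [e1, blk_apply ψ' m j hj']
        simp only [hblk]
      -- equal csets
      have hcseteq : cset ψ m = cset ψ' m := by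
        ext y
        rw [← blk_mem, ← blk_mem, hblk]
      by_cases hxc : x ∈ cset ψ m
      · exact hag x ((blk_mem ψ m x).2 hxc)
      · have hcard' : (s \ cset ψ m).card ≤ N := by
          have hlt : (s \ cset ψ m).card < s.card :=
            Finset.card_lt_card
              ((Finset.ssubset_iff_of_subset Finset.sdiff_subset).2
                ⟨m, hms, fun hc => (Finset.mem_sdiff.1 hc).2 (mem_cset_self ψ m)⟩)
          omega
        have Hsub'2 : ∀ y, ψ' y ∈ s \ cset ψ m ↔ y ∈ s \ cset ψ m := by
          rw [hcseteq]; exact Hsub'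
        have hpre2 : wordRec ψ (s \ cset ψ m) = wordRec ψ' (s \ cset ψ m) := by
          rw [hpre, hcseteq]
        exact IH (s \ cset ψ m) hcard' Hsub Hsub'2 hpre2 x
          (Finset.mem_sdiff.2 ⟨hx, hxc⟩)
    · exfalso; exact h ⟨x, hx⟩

theorem wordRec_univ_inj (ψ ψ' : Equiv.Perm (Fin n))
    (h : wordRec ψ Finset.univ = wordRec ψ' Finset.univ) : ψ = ψ' := by
  ext x
  have := wordRec_inj ψ ψ' (Finset.univ.card) Finset.univ le_rfl
    (univ_inv ψ) (univ_inv ψ') h x (Finset.mem_univ x)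
  rw [this]

/-- `ψ` associated to `σ`: conjugate of the inverse by the reversal. -/
def psiOf (σ : Equiv.Perm (Fin n)) : Equiv.Perm (Fin n) :=
  Fin.revPerm * σ⁻¹ * Fin.revPerm

lemma psiOf_apply (σ : Equiv.Perm (Fin n)) (x : Fin n) :
    psiOf σ x = Fin.rev (σ⁻¹ (Fin.rev x)) := rfl

lemma psiOf_inj : Function.Injective (psiOf (n := n)) := by
  intro σ σ' h
  unfold psiOf at h
  have h1 : σ⁻¹ = σ'⁻¹ := mul_left_cancel (mul_right_cancel h)
  exact inv_injective h1

/-- The bijection: `Phi σ` has the same last value as `σ`, and its `r`-descents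
are the `r`-excedances of `σ`. -/
noncomputable def Phi (σ : Equiv.Perm (Fin n)) : Equiv.Perm (Fin n) :=
  Equiv.ofBijective (fun i => Fin.rev (fw (psiOf σ) i))
    (Finite.injective_iff_bijective.1 (Fin.rev_injective.comp (fw_injective _)))

lemma Phi_apply (σ : Equiv.Perm (Fin n)) (i : Fin n) :
    Phi σ i = Fin.rev (fw (psiOf σ) i) := rfl

lemma Phi_inj : Function.Injective (Phi (n := n)) := by
  intro σ σ' h
  have hfw : ∀ i, fw (psiOf σ) i = fw (psiOf σ') i := by
    intro i
    have := DFunLike.congr_fun h i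
    simp only [Phi_apply] at this
    exact Fin.rev_injective this
  have hwords : wordRec (psiOf σ) Finset.univ = wordRec (psiOf σ') Finset.univ := by
    apply List.ext_getElem
    · rw [length_wordUniv, length_wordUniv]
    · intro j h1 h2
      have hj : j < n := by rwa [length_wordUniv] at h1
      have := hfw ⟨j, hj⟩
      simpa [fw] using this
  exact psiOf_inj (wordRec_univ_inj _ _ hwords)

lemma rExc_psiOf (r : ℕ) (σ : Equiv.Perm (Fin n)) : rExc n r (psiOf σ) = rExc n r σ := by
  unfold rExc
  symm
  apply Finset.card_bij (fun a _ => Fin.rev (σ a))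
  · intro a ha
    simp only [Finset.mem_filter, Finset.mem_univ, true_and] at ha ⊢
    have h1 : psiOf σ (Fin.rev (σ a)) = Fin.rev a := by
      simp [psiOf_apply, Fin.rev_rev]
    rw [h1]
    have h2 := a.isLt
    have h3 := (σ a).isLt
    simp only [Fin.val_rev]
    omega
  · intro a _ b _ hab
    exact σ.injective (Fin.rev_injective hab)
  · intro b hb
    simp only [Finset.mem_filter, Finset.mem_univ, true_and] at hb
    refine ⟨σ⁻¹ (Fin.rev b), ?_, ?_⟩
    · simp only [Finset.mem_filter, Finset.mem_univ, true_and,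
        show σ (σ⁻¹ (Fin.rev b)) = Fin.rev b from σ.apply_symm_apply _]
      have h2 := b.isLt
      have h3 := (σ⁻¹ (Fin.rev b)).isLt
      simp only [psiOf_apply] at hb
      simp only [Fin.val_rev] at hb ⊢
      omega
    · simp [Fin.rev_rev]

lemma rDesc_Phi (r : ℕ) (hr : 1 ≤ r) (σ : Equiv.Perm (Fin n)) :
    rDesc n r (Phi σ) = rExc n r (psiOf σ) := by
  obtain ⟨hmem, hnd, hdich, hlast⟩ := wordUniv_spec (psiOf σ)
  have hlen := length_wordUniv (psiOf σ)
  have key : ∀ i : Fin n,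
      ((if h : (i : ℕ) + 1 < n then ((Phi σ ⟨(i : ℕ) + 1, h⟩ : Fin n) : ℕ) else n) + r
        ≤ (Phi σ i : ℕ)) ↔
      ((fw (psiOf σ) i : ℕ) + r ≤ ((psiOf σ) (fw (psiOf σ) i) : ℕ)) := by
    intro i
    by_cases h : (i : ℕ) + 1 < n
    · rw [dif_pos h]
      have hd := hdich (i : ℕ) (by omega)
      have e1 : fw (psiOf σ) ⟨(i : ℕ) + 1, h⟩
          = (wordRec (psiOf σ) Finset.univ)[(i : ℕ) + 1]'(by omega) := rfl
      have e2 : fw (psiOf σ) i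
          = (wordRec (psiOf σ) Finset.univ)[(i : ℕ)]'(by omega) := rfl
      rw [Phi_apply, Phi_apply]
      rw [e1, e2]
      rcases hd with hd | ⟨hd1, hd2⟩
      · rw [hd]
        have b1 := ((wordRec (psiOf σ) Finset.univ)[(i : ℕ)]'(by omega)).isLt
        have b2 := ((wordRec (psiOf σ) Finset.univ)[(i : ℕ)+1]'(by omega)).isLt
        simp only [Fin.val_rev]
        omega
      · have b1 := ((wordRec (psiOf σ) Finset.univ)[(i : ℕ)]'(by omega)).isLt
        have b2 := ((wordRec (psiOf σ) Finset.univ)[(i : ℕ)+1]'(by omega)).isLt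
        have c1 : ((psiOf σ) ((wordRec (psiOf σ) Finset.univ)[(i : ℕ)]'(by omega)) : ℕ)
            ≤ ((wordRec (psiOf σ) Finset.univ)[(i : ℕ)]'(by omega) : ℕ) := hd1
        have c2 : (((wordRec (psiOf σ) Finset.univ)[(i : ℕ)+1]'(by omega)) : ℕ)
            < ((wordRec (psiOf σ) Finset.univ)[(i : ℕ)]'(by omega) : ℕ) := hd2
        simp only [Fin.val_rev]
        omega
    · rw [dif_neg h]
      have hn0 : 0 < n := i.pos
      have hin : (i : ℕ) = n - 1 := by have := i.isLt; omega
      constructor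
      · intro hc
        exfalso
        have := (Phi σ i).isLt
        omega
      · intro hc
        exfalso
        have hne : wordRec (psiOf σ) Finset.univ ≠ [] := by
          intro hnil
          rw [hnil] at hlen
          simp at hlen
          omega
        have huniv : (Finset.univ : Finset (Fin n)).Nonempty := ⟨i, Finset.mem_univ i⟩
        have h5 := hlast hne huniv
        have e2 : fw (psiOf σ) i = (wordRec (psiOf σ) Finset.univ).getLast hne := by
          rw [List.getLast_eq_getElem]
          exact getElem_congr_idx (by omega)
        rw [e2, h5] at hc
        have h6 : Finset.univ.min' huniv ≤ (wordRec (psiOf σ) Finset.univ).getLast hne :=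
          Finset.min'_le _ _ (Finset.mem_univ _)
        have := Fin.le_def.1 h6
        omega
  unfold rDesc rExc
  rw [Finset.filter_congr (fun i _ => by
    rw [show ((if h : (i : ℕ) + 1 < n then ((Phi σ ⟨(i : ℕ) + 1, h⟩ : Fin n) : ℕ) else n) + r
        ≤ (Phi σ i : ℕ)) = ((fw (psiOf σ) i : ℕ) + r ≤ ((psiOf σ) (fw (psiOf σ) i) : ℕ))
      from propext (key i)])]
  apply Finset.card_bij (fun a _ => fw (psiOf σ) a)
  · intro a ha
    simp only [Finset.mem_filter, Finset.mem_univ, true_and] at ha ⊢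
    exact ha
  · intro a _ b _ hab
    exact fw_injective _ hab
  · intro b hb
    simp only [Finset.mem_filter, Finset.mem_univ, true_and] at hb
    have hbw : b ∈ wordRec (psiOf σ) Finset.univ := (hmem b).2 (Finset.mem_univ b)
    obtain ⟨j, hj, hjb⟩ := List.mem_iff_getElem.1 hbw
    refine ⟨⟨j, by omega⟩, ?_, ?_⟩
    · simp only [Finset.mem_filter, Finset.mem_univ, true_and]
      have : fw (psiOf σ) ⟨j, by omega⟩ = b := by
        rw [← hjb]; rfl
      rw [this]
      exact hb
    · rw [← hjb]; rfl

lemma lastVal_Phi (σ : Equiv.Perm (Fin n)) (hn : 0 < n) :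
    lastVal n (Phi σ) = lastVal n σ := by
  unfold lastVal
  rw [dif_pos hn, dif_pos hn]
  congr 1
  obtain ⟨hmem, hnd, hdich, hlast⟩ := wordUniv_spec (psiOf σ)
  have hlen := length_wordUniv (psiOf σ)
  have hne : wordRec (psiOf σ) Finset.univ ≠ [] := by
    intro hnil
    rw [hnil] at hlen
    simp at hlen
    omega
  have huniv : (Finset.univ : Finset (Fin n)).Nonempty :=
    ⟨⟨0, hn⟩, Finset.mem_univ _⟩
  have hmin : Finset.univ.min' huniv = (⟨0, hn⟩ : Fin n) := by
    apply _root_.le_antisymm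
    · exact Finset.min'_le _ _ (Finset.mem_univ _)
    · rw [Fin.le_def]
      exact Nat.zero_le _
  have h5 := hlast hne huniv
  rw [hmin] at h5
  -- the last letter of the word is ψ⁻¹ 0
  have hinv : (wordRec (psiOf σ) Finset.univ).getLast hne
      = Fin.rev (σ (Fin.rev ⟨0, hn⟩)) := by
    apply (psiOf σ).injective
    rw [h5]
    simp [psiOf_apply, Fin.rev_rev]
  have e2 : fw (psiOf σ) ⟨n - 1, Nat.sub_lt hn Nat.one_pos⟩
      = (wordRec (psiOf σ) Finset.univ).getLast hne := by
    rw [List.getLast_eq_getElem]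
    exact getElem_congr_idx (by simp [hlen])
  have e3 : Fin.rev (⟨0, hn⟩ : Fin n) = ⟨n - 1, Nat.sub_lt hn Nat.one_pos⟩ := by
    apply Fin.ext
    simp [Fin.val_rev]
  rw [Phi_apply, e2, hinv, Fin.rev_rev, e3]


end AuxForStmt0

/-- The number of permutations of `[n]` ending with `k` with exactly `m` `r`-descents
equals the number of permutations of `[n]` ending with `k` with exactly `m` `r`-excedances. -/
theorem stmt0 (n m r k : ℕ) (hn : 1 ≤ n) (hm : 1 ≤ m) (hr : 1 ≤ r) (hk : 1 ≤ k)
    (hkn : k ≤ n) :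
    (Finset.univ.filter fun σ : Equiv.Perm (Fin n) =>
        rDesc n r σ = m ∧ lastVal n σ = k).card =
    (Finset.univ.filter fun σ : Equiv.Perm (Fin n) =>
        rExc n r σ = m ∧ lastVal n σ = k).card := by
  symm
  apply Finset.card_bij (fun σ _ => Phi σ)
  · intro σ hσ
    simp only [Finset.mem_filter, Finset.mem_univ, true_and] at hσ ⊢
    obtain ⟨h1, h2⟩ := hσ
    refine ⟨?_, ?_⟩
    · rw [rDesc_Phi r hr σ, rExc_psiOf r σ, h1]
    · rw [lastVal_Phi σ hn, h2]
  · intro a _ b _ hab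
    exact Phi_inj hab
  · intro τ hτ
    simp only [Finset.mem_filter, Finset.mem_univ, true_and] at hτ
    obtain ⟨σ, hσ⟩ := (Finite.injective_iff_surjective.1 (Phi_inj (n := n))) τ
    refine ⟨σ, ?_, hσ⟩
    simp only [Finset.mem_filter, Finset.mem_univ, true_and]
    obtain ⟨h1, h2⟩ := hτ
    constructor
    · rw [← hσ, rDesc_Phi r hr σ, rExc_psiOf r σ] at h1
      exact h1
    · rw [← hσ, lastVal_Phi σ hn] at h2
      exact h2
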